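/- Consider the BNSL instance constructed from a k-partite m-regular graph G = (V₁∪…∪V_k, E) as follows: the variable set is {v_i : i ∈ [k]} ∪ {v_e : e ∈ E}; for an edge e between colors i and j, the only nonzero parent set of v_e is {v_i, v_j} with score 1; for each i and each vertex v ∈ V_i, the parent set P_i^v = {v_e : e incident to v} of v_i has score m+1, and all other parent sets score 0. Then there exists a DAG over the variable set with total score at least |E| + k + C(k,2) if and only if G contains a k-colored clique; moreover no DAG achieves score greater than |E| + k + C(k,2). -/

import Mathlib

open scoped Classical

open SimpleGraph

lemma aux_inc_card {α : Type*} [Fintype α] (G : SimpleGraph α) {m : ℕ}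
    (hreg : ∀ x : α, (G.neighborSet x).ncard = m) (x : α) :
    (Finset.univ.filter fun e : ↥G.edgeSet => x ∈ (e : Sym2 α)).card = m := by
  classical
  have h1 : (G.incidenceFinset x).card = m := by
    rw [card_incidenceFinset_eq_degree, ← card_neighborFinset_eq_degree,
      neighborFinset_def, ← Set.ncard_eq_toFinset_card', hreg]
  rw [← h1]
  refine Finset.card_bij (fun e _ => (e : Sym2 α)) ?_ ?_ ?_
  · intro e he
    rw [mem_incidenceFinset]
    exact ⟨e.2, (Finset.mem_filter.1 he).2⟩
  · intro e _ e' _ h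
    exact Subtype.ext h
  · intro e he
    rw [mem_incidenceFinset] at he
    exact ⟨⟨e, he.1⟩, Finset.mem_filter.2 ⟨Finset.mem_univ _, he.2⟩, rfl⟩

-- structure of edges with two chosen endpoints
lemma aux_two {α : Type*} [Fintype α] (G : SimpleGraph α) {k : ℕ} (c : α → Fin k)
    (S : Finset (Fin k)) (xw : Fin k → α) (hc : ∀ i ∈ S, c (xw i) = i)
    (e : ↥G.edgeSet) (he : (S.filter fun i => xw i ∈ (e : Sym2 α)).card = 2) :
    ∃ i j, i ∈ S ∧ j ∈ S ∧ i ≠ j ∧ (e : Sym2 α) = s(xw i, xw j) := by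
  obtain ⟨i, j, hij, hset⟩ := Finset.card_eq_two.1 he
  have hi : i ∈ S ∧ xw i ∈ (e : Sym2 α) := by
    have := hset ▸ Finset.mem_insert_self i {j}
    exact Finset.mem_filter.1 this |>.imp id id |>.imp_left id |> fun h => ⟨h.1, h.2⟩
  have hj : j ∈ S ∧ xw j ∈ (e : Sym2 α) := by
    have : j ∈ S.filter fun i => xw i ∈ (e : Sym2 α) := by
      rw [hset]; exact Finset.mem_insert_of_mem (Finset.mem_singleton_self j)
    exact ⟨(Finset.mem_filter.1 this).1, (Finset.mem_filter.1 this).2⟩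
  have hne : xw i ≠ xw j := fun h => hij (by rw [← hc i hi.1, ← hc j hj.1, h])
  exact ⟨i, j, hi.1, hj.1, hij, (Sym2.mem_and_mem_iff hne).1 ⟨hi.2, hj.2⟩⟩

lemma aux_tle2 {α : Type*} [Fintype α] (G : SimpleGraph α) {k : ℕ} (c : α → Fin k)
    (S : Finset (Fin k)) (xw : Fin k → α) (hc : ∀ i ∈ S, c (xw i) = i)
    (e : ↥G.edgeSet) : (S.filter fun i => xw i ∈ (e : Sym2 α)).card ≤ 2 := by
  obtain ⟨a, b, hab⟩ : ∃ a b, (e : Sym2 α) = s(a, b) := by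
    induction (e : Sym2 α) using Sym2.ind with
    | _ x y => exact ⟨x, y, rfl⟩
  have : (S.filter fun i => xw i ∈ (e : Sym2 α)).card ≤ ({a, b} : Finset α).card := by
    apply Finset.card_le_card_of_injOn xw
    · intro i hi
      have := (Finset.mem_filter.1 hi).2
      rw [hab, Sym2.mem_iff] at this
      simpa using this
    · intro i hi j hj h
      rw [← hc i (Finset.mem_filter.1 hi).1, ← hc j (Finset.mem_filter.1 hj).1, h]
  exact this.trans (Finset.card_insert_le _ _ |>.trans (by simp))

lemma aux_count {α : Type*} [Fintype α] (G : SimpleGraph α) {k m : ℕ} (c : α → Fin k)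
    (hreg : ∀ x : α, (G.neighborSet x).ncard = m)
    (S : Finset (Fin k)) (xw : Fin k → α) (hc : ∀ i ∈ S, c (xw i) = i) :
    S.card * m =
      (Finset.univ.filter fun e : ↥G.edgeSet =>
          1 ≤ (S.filter fun i => xw i ∈ (e : Sym2 α)).card).card
      + (Finset.univ.filter fun e : ↥G.edgeSet =>
          (S.filter fun i => xw i ∈ (e : Sym2 α)).card = 2).card := by
  classical
  have h1 : S.card * m = ∑ i ∈ S, (Finset.univ.filter
      fun e : ↥G.edgeSet => xw i ∈ (e : Sym2 α)).card := by
    rw [Finset.sum_congr rfl fun i _ => aux_inc_card G hreg (xw i)]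
    simp [Finset.sum_const, mul_comm]
  have h2 : ∑ i ∈ S, (Finset.univ.filter
      fun e : ↥G.edgeSet => xw i ∈ (e : Sym2 α)).card
      = ∑ e : ↥G.edgeSet, (S.filter fun i => xw i ∈ (e : Sym2 α)).card := by
    simp_rw [Finset.card_filter]
    exact Finset.sum_comm
  rw [h1, h2]
  have h3 : ∀ e : ↥G.edgeSet, (S.filter fun i => xw i ∈ (e : Sym2 α)).card =
      (if 1 ≤ (S.filter fun i => xw i ∈ (e : Sym2 α)).card then 1 else 0)
      + (if (S.filter fun i => xw i ∈ (e : Sym2 α)).card = 2 then 1 else 0) := by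
    intro e
    have := aux_tle2 G c S xw hc e
    split_ifs <;> omega
  rw [Finset.sum_congr rfl fun e _ => h3 e, Finset.sum_add_distrib,
    Finset.card_filter, Finset.card_filter]

lemma aux_ND_card {k : ℕ} :
    (Finset.univ.filter fun z : Sym2 (Fin k) => ¬ z.IsDiag).card = k.choose 2 := by
  classical
  rw [← Fintype.card_subtype, Sym2.card_subtype_not_diag, Fintype.card_fin]

lemma aux_mapsto {α : Type*} [Fintype α] (G : SimpleGraph α) {k : ℕ} (c : α → Fin k)
    (S : Finset (Fin k)) (xw : Fin k → α) (hc : ∀ i ∈ S, c (xw i) = i)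
    (e : ↥G.edgeSet) (he : (S.filter fun i => xw i ∈ (e : Sym2 α)).card = 2) :
    ∃ i j, i ∈ S ∧ j ∈ S ∧ i ≠ j ∧ (e : Sym2 α) = s(xw i, xw j) ∧
      Sym2.map c (e : Sym2 α) = s(i, j) := by
  obtain ⟨i, j, hi, hj, hij, hee⟩ := aux_two G c S xw hc e he
  exact ⟨i, j, hi, hj, hij, hee, by rw [hee, Sym2.map_pair_eq, hc i hi, hc j hj]⟩

lemma aux_injOn {α : Type*} [Fintype α] (G : SimpleGraph α) {k : ℕ} (c : α → Fin k)
    (S : Finset (Fin k)) (xw : Fin k → α) (hc : ∀ i ∈ S, c (xw i) = i) :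
    Set.InjOn (fun e : ↥G.edgeSet => Sym2.map c (e : Sym2 α))
      ↑(Finset.univ.filter fun e : ↥G.edgeSet =>
          (S.filter fun i => xw i ∈ (e : Sym2 α)).card = 2) := by
  intro e he e' he' h
  simp only [Finset.coe_filter, Set.mem_setOf_eq] at he he'
  obtain ⟨i, j, hi, hj, hij, hee, hm⟩ := aux_mapsto G c S xw hc e he.2
  obtain ⟨i', j', hi', hj', hij', hee', hm'⟩ := aux_mapsto G c S xw hc e' he'.2
  have h2 : Sym2.map c (e : Sym2 α) = Sym2.map c (e' : Sym2 α) := h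
  have hpair : s(i, j) = s(i', j') := by rw [← hm, ← hm', h2]
  apply Subtype.ext
  rw [hee, hee']
  rcases Sym2.eq_iff.1 hpair with ⟨h1, h2⟩ | ⟨h1, h2⟩ <;> rw [h1, h2]
  exact Sym2.eq_swap

lemma aux_I_le {α : Type*} [Fintype α] (G : SimpleGraph α) {k : ℕ} (c : α → Fin k)
    (S : Finset (Fin k)) (xw : Fin k → α) (hc : ∀ i ∈ S, c (xw i) = i) :
    (Finset.univ.filter fun e : ↥G.edgeSet =>
        (S.filter fun i => xw i ∈ (e : Sym2 α)).card = 2).card ≤ k.choose 2 := by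
  classical
  rw [← aux_ND_card (k := k)]
  refine Finset.card_le_card_of_injOn (fun e : ↥G.edgeSet => Sym2.map c (e : Sym2 α)) ?_ ?_
  · intro e he
    obtain ⟨i, j, _, _, hij, _, hm⟩ :=
      aux_mapsto G c S xw hc e (Finset.mem_filter.1 he).2
    rw [Finset.mem_coe, Finset.mem_filter]
    refine ⟨Finset.mem_univ _, ?_⟩
    show ¬ (Sym2.map c (e : Sym2 α)).IsDiag
    rw [hm, Sym2.mk_isDiag_iff]; exact hij
  · exact aux_injOn G c S xw hc

lemma aux_surj {α : Type*} [Fintype α] (G : SimpleGraph α) {k : ℕ} (c : α → Fin k)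
    (S : Finset (Fin k)) (xw : Fin k → α) (hc : ∀ i ∈ S, c (xw i) = i)
    (hcard : (Finset.univ.filter fun e : ↥G.edgeSet =>
        (S.filter fun i => xw i ∈ (e : Sym2 α)).card = 2).card = k.choose 2) :
    ∀ i j, i ≠ j → G.Adj (xw i) (xw j) := by
  classical
  set I := Finset.univ.filter fun e : ↥G.edgeSet =>
      (S.filter fun i => xw i ∈ (e : Sym2 α)).card = 2 with hI
  have himg : I.image (fun e : ↥G.edgeSet => Sym2.map c (e : Sym2 α)) =
      Finset.univ.filter fun z : Sym2 (Fin k) => ¬ z.IsDiag := by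
    apply Finset.eq_of_subset_of_card_le
    · intro z hz
      obtain ⟨e, he, rfl⟩ := Finset.mem_image.1 hz
      obtain ⟨i, j, _, _, hij, _, hm⟩ :=
        aux_mapsto G c S xw hc e (Finset.mem_filter.1 he).2
      rw [Finset.mem_filter]
      exact ⟨Finset.mem_univ _, by rw [hm, Sym2.mk_isDiag_iff]; exact hij⟩
    · rw [aux_ND_card, Finset.card_image_of_injOn (aux_injOn G c S xw hc), hcard]
  intro i j hij
  have hz : s(i, j) ∈ I.image (fun e : ↥G.edgeSet => Sym2.map c (e : Sym2 α)) := by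
    rw [himg, Finset.mem_filter]
    exact ⟨Finset.mem_univ _, by rw [Sym2.mk_isDiag_iff]; exact hij⟩
  obtain ⟨e, he, hm⟩ := Finset.mem_image.1 hz
  obtain ⟨a, b, _, _, hab, hee, hm'⟩ :=
    aux_mapsto G c S xw hc e (Finset.mem_filter.1 he).2
  have h2 : Sym2.map c (e : Sym2 α) = s(i, j) := hm
  have hpair : s(a, b) = s(i, j) := by rw [← hm', h2]
  have hedge : (e : Sym2 α) ∈ G.edgeSet := e.2
  have heij : (e : Sym2 α) = s(xw i, xw j) := by
    rcases Sym2.eq_iff.1 hpair with ⟨h1, h2⟩ | ⟨h1, h2⟩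
    · rw [hee, h1, h2]
    · rw [hee, h1, h2]; exact Sym2.eq_swap
  rw [heij, SimpleGraph.mem_edgeSet] at hedge
  exact hedge

lemma aux_clique_I {α : Type*} [Fintype α] (G : SimpleGraph α) {k : ℕ} (c : α → Fin k)
    (xw : Fin k → α) (hc : ∀ i, c (xw i) = i)
    (hclique : ∀ i j, i ≠ j → G.Adj (xw i) (xw j)) :
    (Finset.univ.filter fun e : ↥G.edgeSet =>
        ((Finset.univ : Finset (Fin k)).filter
          fun i => xw i ∈ (e : Sym2 α)).card = 2).card = k.choose 2 := by
  classical
  have hinj : Function.Injective xw := fun i j h => by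
    rw [← hc i, ← hc j, h]
  have himg : (Finset.univ.filter fun e : ↥G.edgeSet =>
      ((Finset.univ : Finset (Fin k)).filter
        fun i => xw i ∈ (e : Sym2 α)).card = 2).image
        (fun e : ↥G.edgeSet => Sym2.map c (e : Sym2 α)) =
      Finset.univ.filter fun z : Sym2 (Fin k) => ¬ z.IsDiag := by
    apply Finset.Subset.antisymm
    · intro z hz
      obtain ⟨e, he, rfl⟩ := Finset.mem_image.1 hz
      obtain ⟨i, j, _, _, hij, _, hm⟩ :=
        aux_mapsto G c Finset.univ xw (fun i _ => hc i) e (Finset.mem_filter.1 he).2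
      rw [Finset.mem_filter]
      exact ⟨Finset.mem_univ _, by rw [hm, Sym2.mk_isDiag_iff]; exact hij⟩
    · intro z hz
      obtain ⟨i, j, rfl⟩ : ∃ i j, z = s(i, j) := by
        induction z using Sym2.ind with
        | _ x y => exact ⟨x, y, rfl⟩
      have hij : i ≠ j := by
        have := (Finset.mem_filter.1 hz).2
        rwa [Sym2.mk_isDiag_iff] at this
      set e : ↥G.edgeSet := ⟨s(xw i, xw j),
        (SimpleGraph.mem_edgeSet G).2 (hclique i j hij)⟩ with hedef
      have hfe : ((Finset.univ : Finset (Fin k)).filter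
          fun a => xw a ∈ (e : Sym2 α)).card = 2 := by
        have : ((Finset.univ : Finset (Fin k)).filter
            fun a => xw a ∈ (e : Sym2 α)) = {i, j} := by
          ext a
          simp only [Finset.mem_filter, Finset.mem_univ, true_and, hedef,
            Sym2.mem_iff, Finset.mem_insert, Finset.mem_singleton]
          constructor
          · rintro (h | h) <;> [left; right] <;> exact hinj h
          · rintro (rfl | rfl) <;> [left; right] <;> rfl
        rw [this, Finset.card_insert_of_notMem (by simpa using hij),
          Finset.card_singleton]
      apply Finset.mem_image.2
      refine ⟨e, Finset.mem_filter.2 ⟨Finset.mem_univ _, hfe⟩, ?_⟩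
      show Sym2.map c (e : Sym2 α) = s(i, j)
      rw [hedef]
      show Sym2.map c s(xw i, xw j) = s(i, j)
      rw [Sym2.map_pair_eq, hc i, hc j]
  have := congrArg Finset.card himg
  rwa [Finset.card_image_of_injOn
    (aux_injOn G c Finset.univ xw (fun i _ => hc i)), aux_ND_card] at this

lemma aux_main {α : Type*} [Fintype α] [Nonempty α] (G : SimpleGraph α) {k m : ℕ}
    (c : α → Fin k)
    (hreg : ∀ x : α, (G.neighborSet x).ncard = m)
    (f : (Fin k ⊕ ↥G.edgeSet) → Set (Fin k ⊕ ↥G.edgeSet) → ℕ)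
    (hfe : ∀ (e : ↥G.edgeSet) (P : Set (Fin k ⊕ ↥G.edgeSet)),
      f (Sum.inr e) P =
        if P = {u | ∃ x : α, x ∈ (e : Sym2 α) ∧ u = Sum.inl (c x)} then 1 else 0)
    (hfi : ∀ (i : Fin k) (P : Set (Fin k ⊕ ↥G.edgeSet)),
      f (Sum.inl i) P =
        if ∃ x : α, c x = i ∧
            P = {u | ∃ ε : ↥G.edgeSet, u = Sum.inr ε ∧ x ∈ (ε : Sym2 α)}
        then m + 1 else 0)
    (D : (Fin k ⊕ ↥G.edgeSet) → (Fin k ⊕ ↥G.edgeSet) → Prop)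
    (hD : Irreflexive (Relation.TransGen D)) :
    (∑ w : Fin k ⊕ ↥G.edgeSet, f w {u | D u w} ≤
        G.edgeSet.ncard + k + Nat.choose k 2) ∧
    (G.edgeSet.ncard + k + Nat.choose k 2 ≤
        ∑ w : Fin k ⊕ ↥G.edgeSet, f w {u | D u w} →
      ∃ v : Fin k → α, (∀ i, c (v i) = i) ∧
        ∀ i j, i ≠ j → G.Adj (v i) (v j)) := by
  classical
  set N := Fintype.card ↥G.edgeSet with hN
  have hNE : G.edgeSet.ncard = N := by
    rw [← Nat.card_coe_set_eq, Nat.card_eq_fintype_card]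
  -- the condition for a color to score
  set cond : Fin k → Prop := fun i => ∃ x : α, c x = i ∧
      {u | D u (Sum.inl i)} =
        {u | ∃ ε : ↥G.edgeSet, u = Sum.inr ε ∧ x ∈ (ε : Sym2 α)} with hcond
  set S : Finset (Fin k) := Finset.univ.filter cond with hS
  set xw : Fin k → α := fun i =>
    if h : cond i then h.choose else Classical.arbitrary α with hxw
  have hxwS : ∀ i ∈ S, c (xw i) = i ∧
      {u | D u (Sum.inl i)} =
        {u | ∃ ε : ↥G.edgeSet, u = Sum.inr ε ∧ xw i ∈ (ε : Sym2 α)} := by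
    intro i hi
    have h : cond i := (Finset.mem_filter.1 hi).2
    have := h.choose_spec
    rw [hxw]
    simp only [dif_pos h]
    exact this
  have hc : ∀ i ∈ S, c (xw i) = i := fun i hi => (hxwS i hi).1
  set T : Finset ↥G.edgeSet := Finset.univ.filter (fun e => {u | D u (Sum.inr e)}
      = {u | ∃ x : α, x ∈ (e : Sym2 α) ∧ u = Sum.inl (c x)}) with hT
  set B : Finset ↥G.edgeSet := Finset.univ.filter
      (fun e => 1 ≤ (S.filter fun i => xw i ∈ (e : Sym2 α)).card) with hB
  set I : Finset ↥G.edgeSet := Finset.univ.filter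
      (fun e => (S.filter fun i => xw i ∈ (e : Sym2 α)).card = 2) with hI
  -- score decomposition
  have hscore : ∑ w : Fin k ⊕ ↥G.edgeSet, f w {u | D u w}
      = S.card * (m + 1) + T.card := by
    rw [Fintype.sum_sum_type]
    congr 1
    · have : ∀ i : Fin k, f (Sum.inl i) {u | D u (Sum.inl i)}
          = if cond i then m + 1 else 0 := fun i => hfi i _
      rw [Finset.sum_congr rfl fun i _ => this i, ← Finset.sum_filter, ← hS,
        Finset.sum_const, smul_eq_mul]
    · have : ∀ e : ↥G.edgeSet, f (Sum.inr e) {u | D u (Sum.inr e)}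
          = if {u | D u (Sum.inr e)}
              = {u | ∃ x : α, x ∈ (e : Sym2 α) ∧ u = Sum.inl (c x)} then 1 else 0 :=
        fun e => hfe e _
      rw [Finset.sum_congr rfl fun e _ => this e, ← Finset.sum_filter, ← hT,
        Finset.sum_const, smul_eq_mul, mul_one]
  -- disjointness of T and B
  have hdisj : Disjoint T B := by
    rw [Finset.disjoint_left]
    intro e heT heB
    have h1 : 1 ≤ (S.filter fun i => xw i ∈ (e : Sym2 α)).card :=
      (Finset.mem_filter.1 heB).2
    obtain ⟨i, hi⟩ := Finset.card_pos.1 h1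
    have hiS : i ∈ S := (Finset.mem_filter.1 hi).1
    have hie : xw i ∈ (e : Sym2 α) := (Finset.mem_filter.1 hi).2
    have hd1 : D (Sum.inr e) (Sum.inl i) := by
      have := (hxwS i hiS).2
      have : (Sum.inr e : Fin k ⊕ ↥G.edgeSet) ∈ {u | D u (Sum.inl i)} := by
        rw [this]; exact ⟨e, rfl, hie⟩
      exact this
    have hd2 : D (Sum.inl i) (Sum.inr e) := by
      have heq := (Finset.mem_filter.1 heT).2
      have : (Sum.inl i : Fin k ⊕ ↥G.edgeSet) ∈ {u | D u (Sum.inr e)} := by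
        rw [heq]
        exact ⟨xw i, hie, by rw [hc i hiS]⟩
      exact this
    exact hD (Sum.inl i) (Relation.TransGen.head hd2 (Relation.TransGen.single hd1))
  have hTB : T.card + B.card ≤ N := by
    rw [← Finset.card_union_of_disjoint hdisj]
    simpa [hN] using Finset.card_le_univ (T ∪ B)
  have hcount : S.card * m = B.card + I.card := aux_count G c hreg S xw hc
  have hIle : I.card ≤ k.choose 2 := aux_I_le G c S xw hc
  have hSle : S.card ≤ k := by
    simpa using Finset.card_le_univ S
  have hmul : S.card * (m + 1) = S.card * m + S.card := by ring
  constructor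
  · rw [hscore, hNE]; omega
  · intro hge
    rw [hscore, hNE] at hge
    have hSk : S.card = k ∧ I.card = k.choose 2 := by omega
    have hSuniv : S = Finset.univ := by
      apply Finset.eq_univ_of_card
      rw [hSk.1, Fintype.card_fin]
    refine ⟨xw, fun i => hc i (hSuniv ▸ Finset.mem_univ i), ?_⟩
    exact aux_surj G c S xw hc hSk.2

lemma aux_build {α : Type*} [Fintype α] (G : SimpleGraph α) {k m : ℕ}
    (c : α → Fin k)
    (hreg : ∀ x : α, (G.neighborSet x).ncard = m)
    (f : (Fin k ⊕ ↥G.edgeSet) → Set (Fin k ⊕ ↥G.edgeSet) → ℕ)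
    (hfe : ∀ (e : ↥G.edgeSet) (P : Set (Fin k ⊕ ↥G.edgeSet)),
      f (Sum.inr e) P =
        if P = {u | ∃ x : α, x ∈ (e : Sym2 α) ∧ u = Sum.inl (c x)} then 1 else 0)
    (hfi : ∀ (i : Fin k) (P : Set (Fin k ⊕ ↥G.edgeSet)),
      f (Sum.inl i) P =
        if ∃ x : α, c x = i ∧
            P = {u | ∃ ε : ↥G.edgeSet, u = Sum.inr ε ∧ x ∈ (ε : Sym2 α)}
        then m + 1 else 0)
    (v : Fin k → α) (hcv : ∀ i, c (v i) = i)
    (hclique : ∀ i j, i ≠ j → G.Adj (v i) (v j)) :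
    ∃ D : (Fin k ⊕ ↥G.edgeSet) → (Fin k ⊕ ↥G.edgeSet) → Prop,
      Irreflexive (Relation.TransGen D) ∧
      G.edgeSet.ncard + k + Nat.choose k 2 ≤
        ∑ w : Fin k ⊕ ↥G.edgeSet, f w {u | D u w} := by
  classical
  set N := Fintype.card ↥G.edgeSet with hN
  have hNE : G.edgeSet.ncard = N := by
    rw [← Nat.card_coe_set_eq, Nat.card_eq_fintype_card]
  set D : (Fin k ⊕ ↥G.edgeSet) → (Fin k ⊕ ↥G.edgeSet) → Prop := fun u w =>
    (∃ (i : Fin k) (e : ↥G.edgeSet), u = Sum.inr e ∧ w = Sum.inl i ∧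
        v i ∈ (e : Sym2 α)) ∨
    (∃ (e : ↥G.edgeSet) (x : α), w = Sum.inr e ∧ (∀ j, v j ∉ (e : Sym2 α)) ∧
        x ∈ (e : Sym2 α) ∧ u = Sum.inl (c x)) with hDdef
  -- rank function
  set r : (Fin k ⊕ ↥G.edgeSet) → ℕ := fun u =>
    Sum.rec (fun _ => 1)
      (fun e => if ∃ i, v i ∈ (e : Sym2 α) then 0 else 2) u with hr
  have hstep : ∀ u w, D u w → r u < r w := by
    intro u w h
    rcases h with ⟨i, e, rfl, rfl, hie⟩ | ⟨e, x, rfl, hnone, hxe, rfl⟩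
    · show (if ∃ i, v i ∈ (e : Sym2 α) then 0 else 2) < 1
      rw [if_pos ⟨i, hie⟩]; norm_num
    · show 1 < (if ∃ i, v i ∈ (e : Sym2 α) then 0 else 2)
      rw [if_neg (by push_neg; exact fun j => hnone j)]; norm_num
  have hirr : Irreflexive (Relation.TransGen D) := by
    intro a ha
    have : ∀ u w, Relation.TransGen D u w → r u < r w := by
      intro u w h
      induction h with
      | single h => exact hstep _ _ h
      | tail _ h ih => exact ih.trans (hstep _ _ h)
    exact absurd (this a a ha) (lt_irrefl _)
  refine ⟨D, hirr, ?_⟩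
  -- parent set of a color vertex
  have hPi : ∀ i : Fin k, {u | D u (Sum.inl i)} =
      {u | ∃ ε : ↥G.edgeSet, u = Sum.inr ε ∧ v i ∈ (ε : Sym2 α)} := by
    intro i
    ext u
    constructor
    · rintro (⟨i', e, rfl, hw, hie⟩ | ⟨e, x, hw, _⟩)
      · obtain rfl : i' = i := by exact Sum.inl.inj hw.symm
        exact ⟨e, rfl, hie⟩
      · exact absurd hw (by simp)
    · rintro ⟨e, rfl, hie⟩
      exact Or.inl ⟨i, e, rfl, rfl, hie⟩
  -- parent set of an edge vertex
  have hPe : ∀ e : ↥G.edgeSet, f (Sum.inr e) {u | D u (Sum.inr e)} =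
      if ∀ j, v j ∉ (e : Sym2 α) then 1 else 0 := by
    intro e
    rw [hfe]
    by_cases hall : ∀ j, v j ∉ (e : Sym2 α)
    · rw [if_pos hall, if_pos]
      ext u
      constructor
      · rintro (⟨i, e', hu, hw, _⟩ | ⟨e', x, hw, _, hxe, rfl⟩)
        · exact absurd hw (by simp)
        · obtain rfl : e' = e := by exact Sum.inr.inj hw.symm
          exact ⟨x, hxe, rfl⟩
      · rintro ⟨x, hxe, rfl⟩
        exact Or.inr ⟨e, x, rfl, hall, hxe, rfl⟩
    · rw [if_neg hall, if_neg]
      intro hcontra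
      obtain ⟨a, b, hab⟩ : ∃ a b, (e : Sym2 α) = s(a, b) := by
        induction (e : Sym2 α) using Sym2.ind with
        | _ x y => exact ⟨x, y, rfl⟩
      have hmem : (Sum.inl (c a) : Fin k ⊕ ↥G.edgeSet) ∈
          {u | ∃ x : α, x ∈ (e : Sym2 α) ∧ u = Sum.inl (c x)} :=
        ⟨a, by rw [hab]; exact Sym2.mem_mk_left a b, rfl⟩
      rw [← hcontra] at hmem
      rcases hmem with ⟨i, e', hu, hw, _⟩ | ⟨e', x, hw, hnone, _⟩
      · exact absurd hu (by simp)
      · obtain rfl : e' = e := by exact Sum.inr.inj hw.symm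
        exact hall hnone
  -- score computation
  have hscore : ∑ w : Fin k ⊕ ↥G.edgeSet, f w {u | D u w}
      = k * (m + 1) +
        (Finset.univ.filter fun e : ↥G.edgeSet =>
          ∀ j, v j ∉ (e : Sym2 α)).card := by
    rw [Fintype.sum_sum_type]
    congr 1
    · have : ∀ i : Fin k, f (Sum.inl i) {u | D u (Sum.inl i)} = m + 1 := by
        intro i
        rw [hfi, if_pos ⟨v i, hcv i, hPi i⟩]
      rw [Finset.sum_congr rfl fun i _ => this i, Finset.sum_const,
        Finset.card_univ, Fintype.card_fin, smul_eq_mul]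
    · rw [Finset.sum_congr rfl fun e _ => hPe e, ← Finset.sum_filter,
        Finset.sum_const, smul_eq_mul, mul_one]
  -- counting
  have hc : ∀ i ∈ (Finset.univ : Finset (Fin k)), c (v i) = i := fun i _ => hcv i
  have hcount := aux_count G c hreg Finset.univ v hc
  have hIcard := aux_clique_I G c v hcv hclique
  rw [Finset.card_univ, Fintype.card_fin] at hcount
  have hpred : ∀ e : ↥G.edgeSet, (¬ ∀ j, v j ∉ (e : Sym2 α)) ↔
      (1 ≤ ((Finset.univ : Finset (Fin k)).filter
        fun i => v i ∈ (e : Sym2 α)).card) := by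
    intro e
    rw [Nat.one_le_iff_ne_zero, Ne, Finset.card_eq_zero, Finset.filter_eq_empty_iff]
    push_neg
    simp
  have hBeq : (Finset.univ.filter fun e : ↥G.edgeSet =>
        ∀ j, v j ∉ (e : Sym2 α)).card
      + (Finset.univ.filter fun e : ↥G.edgeSet =>
        1 ≤ ((Finset.univ : Finset (Fin k)).filter
          fun i => v i ∈ (e : Sym2 α)).card).card = N := by
    have h := Finset.card_filter_add_card_filter_not
      (s := (Finset.univ : Finset ↥G.edgeSet))
      (p := fun e : ↥G.edgeSet => ∀ j, v j ∉ (e : Sym2 α))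
    have h2 : (Finset.univ.filter fun a : ↥G.edgeSet =>
        ¬∀ j, v j ∉ (a : Sym2 α)) =
        (Finset.univ.filter fun e : ↥G.edgeSet =>
          1 ≤ ((Finset.univ : Finset (Fin k)).filter
            fun i => v i ∈ (e : Sym2 α)).card) :=
      Finset.filter_congr fun a _ => hpred a
    rw [h2, Finset.card_univ, ← hN] at h
    exact h
  rw [hscore, hNE]
  have hmul : k * (m + 1) = k * m + k := by ring
  omega

/-- the BNSL instance built from a `k`-partite `m`-regular graph
`G` (with coloring `c`).  Variables are `Fin k ⊕ ↥G.edgeSet`.  For an edge `e`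
the only nonzero parent set of `v_e` consists of the (color vertices of the)
two endpoints of `e`, with score `1`; for a color `i`, any parent set of the
form `{v_e : e incident to x}` for some vertex `x` of color `i` scores `m+1`.
A DAG over the variables achieves total score at least `|E| + k + C(k,2)` iff
`G` has a `k`-colored clique, and no DAG scores more. -/
theorem stmt13 {α : Type*} [Fintype α] (G : SimpleGraph α) (k m : ℕ)
    (c : α → Fin k)
    (hpart : ∀ x y : α, G.Adj x y → c x ≠ c y)
    (hreg : ∀ x : α, (G.neighborSet x).ncard = m)
    (f : (Fin k ⊕ ↥G.edgeSet) → Set (Fin k ⊕ ↥G.edgeSet) → ℕ)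
    (hfe : ∀ (e : ↥G.edgeSet) (P : Set (Fin k ⊕ ↥G.edgeSet)),
      f (Sum.inr e) P =
        if P = {u | ∃ x : α, x ∈ (e : Sym2 α) ∧ u = Sum.inl (c x)} then 1 else 0)
    (hfi : ∀ (i : Fin k) (P : Set (Fin k ⊕ ↥G.edgeSet)),
      f (Sum.inl i) P =
        if ∃ x : α, c x = i ∧
            P = {u | ∃ ε : ↥G.edgeSet, u = Sum.inr ε ∧ x ∈ (ε : Sym2 α)}
        then m + 1 else 0) :
    (∀ D : (Fin k ⊕ ↥G.edgeSet) → (Fin k ⊕ ↥G.edgeSet) → Prop,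
        Irreflexive (Relation.TransGen D) →
        ∑ w : Fin k ⊕ ↥G.edgeSet, f w {u | D u w} ≤
          G.edgeSet.ncard + k + Nat.choose k 2) ∧
    ((∃ D : (Fin k ⊕ ↥G.edgeSet) → (Fin k ⊕ ↥G.edgeSet) → Prop,
        Irreflexive (Relation.TransGen D) ∧
        G.edgeSet.ncard + k + Nat.choose k 2 ≤
          ∑ w : Fin k ⊕ ↥G.edgeSet, f w {u | D u w}) ↔
      ∃ v : Fin k → α, (∀ i, c (v i) = i) ∧
        ∀ i j, i ≠ j → G.Adj (v i) (v j)) := by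
  classical
  rcases isEmpty_or_nonempty α with hα | hα
  · -- the graph is empty
    have hsym : IsEmpty (Sym2 α) := by infer_instance
    have hedge : G.edgeSet = ∅ := Set.eq_empty_of_isEmpty _
    have hncard : G.edgeSet.ncard = 0 := by rw [hedge, Set.ncard_empty]
    have hscore : ∀ D : (Fin k ⊕ ↥G.edgeSet) → (Fin k ⊕ ↥G.edgeSet) → Prop,
        ∑ w : Fin k ⊕ ↥G.edgeSet, f w {u | D u w} = 0 := by
      intro D
      rw [Fintype.sum_sum_type]
      have h1 : ∀ i : Fin k, f (Sum.inl i) {u | D u (Sum.inl i)} = 0 := by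
        intro i
        rw [hfi, if_neg]
        rintro ⟨x, -⟩
        exact hα.elim x
      have h2 : (∑ e : ↥G.edgeSet, f (Sum.inr e) {u | D u (Sum.inr e)}) = 0 := by
        haveI : IsEmpty ↥G.edgeSet := by
          rw [hedge]; infer_instance
        simp
      rw [h2, Finset.sum_congr rfl fun i _ => h1 i]
      simp
    constructor
    · intro D _
      rw [hscore D]
      exact Nat.zero_le _
    · constructor
      · rintro ⟨D, _, hge⟩
        rw [hscore D, hncard] at hge
        have hk : k = 0 := by
          have := Nat.le_zero.1 hge
          omega
        refine ⟨fun i => absurd i.isLt (by omega), fun i => ?_, fun i j _ => ?_⟩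
        · exact absurd i.isLt (by omega)
        · exact absurd i.isLt (by omega)
      · rintro ⟨v, -, -⟩
        by_cases hk : k = 0
        · refine ⟨fun _ _ => False, ?_, ?_⟩
          · have key : ∀ a b : Fin k ⊕ ↥G.edgeSet,
                Relation.TransGen (fun _ _ => False) a b → False := by
              intro a b h
              induction h with
              | single h => exact h
              | tail _ h _ => exact h
            exact fun a ha => key a a ha
          · rw [hscore, hncard, hk]
            simp
        · exact (hα.elim (v ⟨0, Nat.pos_of_ne_zero hk⟩))
  · constructor
    · intro D hD
      exact (aux_main G c hreg f hfe hfi D hD).1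
    · constructor
      · rintro ⟨D, hD, hge⟩
        exact (aux_main G c hreg f hfe hfi D hD).2 hge
      · rintro ⟨v, hcv, hclique⟩
        exact aux_build G c hreg f hfe hfi v hcv hclique
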